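/- Let (Ω, μ) be a measure space, θ₀ ∈ ℝ^m, k ∈ {1,…,m}, α > 0, and F : ℝ^m × Ω → ℝ. Denote by S = {θ₀ + t·e_k : t ∈ [0, α]} the segment from θ₀ in the k-th coordinate direction. Assume: (i) F(θ, ·) is μ-integrable for every θ ∈ S; (ii) for μ-almost every ω, the map θ ↦ F(θ, ω) is continuous on S and, except at a countable set β(ω) ⊆ S of points not containing θ₀, has a partial derivative ∂F/∂θ^k(θ, ω) at every θ ∈ S; (iii) the function ω ↦ sup_{θ ∈ S ∖ β(ω)} |∂F/∂θ^k(θ, ω)| is μ-integrable. Then the (right) partial derivative of θ ↦ ∫_Ω F(θ, ω) dμ(ω) in the direction e_k exists at θ₀ and equals ∫_Ω ∂F/∂θ^k(θ₀, ω) dμ(ω). -/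

import Mathlib

open MeasureTheory Set Filter Topology

noncomputable section

/-- One-sided mean value inequality for a continuous function differentiable off a
countable set. -/
private lemma aux_mvt_one_sided {f f' : ℝ → ℝ} {a b C : ℝ} {β : Set ℝ} (hβ : β.Countable)
    (hab : a ≤ b) (hf : ContinuousOn f (Icc a b))
    (hd : ∀ x ∈ Icc a b, x ∉ β → HasDerivAt f (f' x) x)
    (hC : ∀ x ∈ Icc a b, x ∉ β → f' x ≤ C) :
    f b - f a ≤ C * (b - a) := by
  obtain ⟨u, hu⟩ := (hβ.insert a).exists_eq_range (insert_nonempty _ _)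
  have hrange : β ⊆ Set.range u := hu ▸ Set.subset_insert a β
  set w : ℕ → ℝ := fun n => (1/2 : ℝ)^n with hw
  have hwpos : ∀ n, 0 < w n := fun n => by positivity
  have hwsum : Summable w := summable_geometric_of_lt_one (by norm_num) (by norm_num)
  set T : ℝ → ℕ → ℝ := fun x n => if u n < x then w n else 0 with hT
  have hTle : ∀ x n, T x n ≤ w n := by
    intro x n; by_cases h1 : u n < x <;> simp [T, h1, (hwpos n).le]
  have hTnonneg : ∀ x n, 0 ≤ T x n := by
    intro x n; by_cases h1 : u n < x <;> simp [T, h1, (hwpos n).le]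
  have hTsum : ∀ x, Summable (T x) := fun x =>
    hwsum.of_nonneg_of_le (hTnonneg x) (hTle x)
  set h : ℝ → ℝ := fun x => ∑' n, T x n with hh
  have hTmono : ∀ {x y : ℝ}, x ≤ y → ∀ n, T x n ≤ T y n := by
    intro x y hxy n
    by_cases h1 : u n < x
    · simp [T, h1, h1.trans_le hxy]
    · by_cases h2 : u n < y <;> simp [T, h1, h2, (hwpos n).le]
  have hmono : Monotone h := fun x y hxy =>
    Summable.tsum_le_tsum (hTmono hxy) (hTsum x) (hTsum y)
  have hnonneg : ∀ x, 0 ≤ h x := fun x => tsum_nonneg (hTnonneg x)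
  have hhle : ∀ x, h x ≤ 2 := by
    intro x
    have h1 : h x ≤ ∑' n, w n := Summable.tsum_le_tsum (hTle x) (hTsum x) hwsum
    have h2 : ∑' n, w n = 2 := by
      rw [hw, tsum_geometric_of_lt_one (by norm_num) (by norm_num)]; norm_num
    linarith
  have hjump : ∀ m y, u m < y → h (u m) + w m ≤ h y := by
    intro m y hmy
    have hsing : Summable (fun n => if n = m then w m else 0) :=
      summable_of_ne_finset_zero (s := {m}) (by intro n hn; simp at hn; simp [hn])
    have e1 : h (u m) + w m = ∑' n, (T (u m) n + if n = m then w m else 0) := by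
      rw [Summable.tsum_add (hTsum _) hsing, tsum_ite_eq]
    rw [e1]
    refine Summable.tsum_le_tsum ?_ ((hTsum _).add hsing) (hTsum y)
    intro n
    by_cases hnm : n = m
    · subst hnm
      simp [T, lt_irrefl, hmy]
    · simp only [hnm, if_false, add_zero]
      refine hTmono ?_ n
      exact hmy.le
  have key : ∀ ε : ℝ, 0 < ε → f b - f a ≤ (C+ε)*(b-a) + ε * 2 := by
    intro ε hε
    set A : Set ℝ := {x | ∀ y ∈ Icc a x, f y - f a ≤ (C+ε)*(y-a) + ε * h y} with hA
    have haA : a ∈ A := by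
      intro y hy
      have hya : y = a := le_antisymm hy.2 hy.1
      subst hya
      have := hnonneg y
      nlinarith
    have hclosed : IsClosed (A ∩ Icc a b) := by
      refine IsSeqClosed.isClosed ?_
      intro x p hx hxl
      have hpI : p ∈ Icc a b := isClosed_Icc.isSeqClosed (fun n => (hx n).2) hxl
      refine ⟨?_, hpI⟩
      intro y hy
      rcases lt_or_eq_of_le hy.2 with hlt | heq
      · have : ∀ᶠ n in atTop, y < x n := hxl.eventually (eventually_gt_nhds hlt)
        obtain ⟨n, hn⟩ := this.exists
        exact (hx n).1 y ⟨hy.1, hn.le⟩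
      · subst heq
        by_cases hc : ∃ n, y ≤ x n
        · obtain ⟨n, hn⟩ := hc
          exact (hx n).1 y ⟨hy.1, hn⟩
        · push_neg at hc
          have hfx : Tendsto (fun n => f (x n)) atTop (𝓝 (f y)) := by
            refine ((hf y hpI).tendsto).comp ?_
            exact tendsto_nhdsWithin_of_tendsto_nhds_of_eventually_within _ hxl
              (Eventually.of_forall (fun n => (hx n).2))
          have hineq : ∀ n, f (x n) - f a ≤ (C+ε)*(x n - a) + ε * h y := by
            intro n
            have h1 := (hx n).1 (x n) ⟨(hx n).2.1, le_rfl⟩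
            have h2 : h (x n) ≤ h y := hmono (hc n).le
            nlinarith
          have hlhs : Tendsto (fun n => f (x n) - f a) atTop (𝓝 (f y - f a)) :=
            hfx.sub tendsto_const_nhds
          have hrhs : Tendsto (fun n => (C+ε)*(x n - a) + ε * h y) atTop
              (𝓝 ((C+ε)*(y - a) + ε * h y)) := by
            exact ((tendsto_const_nhds.mul (hxl.sub tendsto_const_nhds)).add
              tendsto_const_nhds)
          exact le_of_tendsto_of_tendsto' hlhs hrhs hineq
    have hprog : ∀ x ∈ A ∩ Ico a b, A ∈ 𝓝[>] x := by
      rintro x ⟨hxA, hxI⟩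
      have hx_mem : x ∈ Icc a b := ⟨hxI.1, hxI.2.le⟩
      have hfx : f x - f a ≤ (C+ε)*(x-a) + ε * h x := hxA x ⟨hxI.1, le_rfl⟩
      have hev : ∀ᶠ z in 𝓝[>] x, f z - f a ≤ (C+ε)*(z-a) + ε * h z := by
        by_cases hxβ : x ∈ β
        · obtain ⟨m, hm⟩ := hrange hxβ
          have hcont : Tendsto f (𝓝[>] x) (𝓝 (f x)) := by
            have h2 : 𝓝[Ioc x b] x = 𝓝[>] x := nhdsWithin_Ioc_eq_nhdsGT hxI.2
            rw [← h2]
            exact ((hf x hx_mem).tendsto).mono_left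
              (nhdsWithin_mono x (fun z hz => ⟨hxI.1.trans hz.1.le, hz.2⟩))
          have hq : Tendsto (fun z => f z - f x - (C+ε)*(z-x)) (𝓝[>] x) (𝓝 0) := by
            have h1 : Tendsto (fun z => f z - f x - (C+ε)*(z-x)) (𝓝[>] x)
                (𝓝 (f x - f x - (C+ε)*(x-x))) := by
              refine (hcont.sub tendsto_const_nhds).sub ?_
              refine tendsto_const_nhds.mul ?_
              exact (tendsto_nhdsWithin_of_tendsto_nhds tendsto_id).sub tendsto_const_nhds
            simpa using h1
          have hq2 : ∀ᶠ z in 𝓝[>] x, f z - f x - (C+ε)*(z-x) < ε * w m :=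
            hq.eventually (gt_mem_nhds (by positivity))
          filter_upwards [hq2, self_mem_nhdsWithin] with z hz hz'
          have hjz : h x + w m ≤ h z := by
            rw [← hm]; exact hjump m z (by rw [hm]; exact hz')
          have hεh : ε * (h x + w m) ≤ ε * h z := by
            exact mul_le_mul_of_nonneg_left hjz hε.le
          nlinarith
        · have hd' := hd x hx_mem hxβ
          have hC' := hC x hx_mem hxβ
          have hslope : Tendsto (slope f x) (𝓝[≠] x) (𝓝 (f' x)) :=
            hasDerivAt_iff_tendsto_slope.mp hd'
          have hs2 : Tendsto (slope f x) (𝓝[>] x) (𝓝 (f' x)) :=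
            hslope.mono_left (nhdsWithin_mono x (fun z hz => ne_of_gt hz))
          have hev2 : ∀ᶠ z in 𝓝[>] x, slope f x z < C + ε :=
            hs2.eventually (gt_mem_nhds (by linarith))
          filter_upwards [hev2, self_mem_nhdsWithin] with z hz hz'
          have hzx : x < z := hz'
          have hfz : f z - f x < (C+ε)*(z-x) := by
            rw [slope_def_field, div_lt_iff₀ (by linarith)] at hz
            linarith [hz]
          have hεh : ε * h x ≤ ε * h z :=
            mul_le_mul_of_nonneg_left (hmono hzx.le) hε.le
          nlinarith
      obtain ⟨δ, hδx, hδ⟩ := mem_nhdsGT_iff_exists_Ioc_subset.mp hev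
      refine mem_nhdsGT_iff_exists_Ioc_subset.mpr ⟨δ, hδx, ?_⟩
      intro z hz y hy
      rcases le_or_gt y x with h1 | h1
      · exact hxA y ⟨hy.1, h1⟩
      · exact hδ ⟨h1, hy.2.trans hz.2⟩
    have hsub : Icc a b ⊆ A :=
      hclosed.Icc_subset_of_forall_mem_nhdsWithin haA hprog
    have hbA : b ∈ A := hsub ⟨hab, le_rfl⟩
    have h1 := hbA b ⟨hab, le_rfl⟩
    have h2 := hhle b
    nlinarith
  have hlim : Tendsto (fun ε : ℝ => (C+ε)*(b-a) + ε * 2) (𝓝[>] (0:ℝ))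
      (𝓝 (C * (b - a))) := by
    have h1 : Tendsto (fun ε : ℝ => (C+ε)*(b-a) + ε * 2) (𝓝 (0:ℝ))
        (𝓝 ((C+0)*(b-a) + 0 * 2)) := by
      exact ((tendsto_const_nhds.add tendsto_id).mul tendsto_const_nhds).add
        (tendsto_id.mul tendsto_const_nhds)
    have h2 : (C+0)*(b-a) + 0 * 2 = C * (b - a) := by ring
    rw [h2] at h1
    exact h1.mono_left nhdsWithin_le_nhds
  refine ge_of_tendsto hlim ?_
  filter_upwards [self_mem_nhdsWithin] with ε hε
  exact key ε hε

/-- Two-sided mean value inequality for a continuous function differentiable off a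
countable set, with a bound on the absolute value of the derivative. -/
private lemma aux_mvt_abs {f f' : ℝ → ℝ} {a b C : ℝ} {β : Set ℝ} (hβ : β.Countable)
    (hab : a ≤ b) (hf : ContinuousOn f (Icc a b))
    (hd : ∀ x ∈ Icc a b, x ∉ β → HasDerivAt f (f' x) x)
    (hC : ∀ x ∈ Icc a b, x ∉ β → |f' x| ≤ C) :
    |f b - f a| ≤ C * (b - a) := by
  have h1 : f b - f a ≤ C * (b - a) :=
    aux_mvt_one_sided hβ hab hf hd (fun x hx hxβ => (abs_le.mp (hC x hx hxβ)).2)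
  have h2 : (-f) b - (-f) a ≤ C * (b - a) :=
    aux_mvt_one_sided (f' := fun x => -f' x) hβ hab hf.neg
      (fun x hx hxβ => (hd x hx hxβ).neg)
      (fun x hx hxβ => by
        have := (abs_le.mp (hC x hx hxβ)).1
        show -f' x ≤ C
        linarith)
  simp only [Pi.neg_apply] at h2
  rw [abs_le]
  constructor <;> linarith

/-- **Interchange of derivative and integral (Theorem 2.1).**
`S` is the segment from `θ₀` of length `α` in the `k`-th coordinate direction.  If
`F(θ,·)` is integrable for `θ ∈ S`, and for a.e. `ω` the map `θ ↦ F(θ,ω)` is continuous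
on `S` and has partial derivative `D θ ω` in the direction `e_k` at every point of `S`
outside a countable set `β ω ⊆ S` not containing `θ₀`, and if the partial derivatives are
dominated on `S ∖ β ω` by an integrable function `g` (the integrability of the pointwise
supremum), then the right partial derivative of `θ ↦ ∫ F(θ,ω) dμ(ω)` in the direction
`e_k` exists at `θ₀` and equals `∫ D θ₀ ω dμ(ω)`. -/
theorem stmt_2
    (m : ℕ) {Ω : Type*} [MeasurableSpace Ω] (μ : Measure Ω)
    (θ₀ : EuclideanSpace ℝ (Fin m)) (k : Fin m) (α : ℝ) (hα : 0 < α)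
    (F D : EuclideanSpace ℝ (Fin m) → Ω → ℝ)
    (β : Ω → Set (EuclideanSpace ℝ (Fin m)))
    (S : Set (EuclideanSpace ℝ (Fin m)))
    (hS : S = (fun t : ℝ => θ₀ + t • (EuclideanSpace.single k (1 : ℝ))) '' Set.Icc 0 α)
    (hFint : ∀ θ ∈ S, Integrable (F θ) μ)
    (hae : ∀ᵐ ω ∂μ, (β ω).Countable ∧ β ω ⊆ S ∧ θ₀ ∉ β ω ∧
      ContinuousOn (fun θ => F θ ω) S ∧
      ∀ θ ∈ S, θ ∉ β ω →
        HasLineDerivAt ℝ (fun θ' => F θ' ω) (D θ ω) θ (EuclideanSpace.single k (1 : ℝ)))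
    (g : Ω → ℝ) (hg : Integrable g μ)
    (hbound : ∀ᵐ ω ∂μ, ∀ θ ∈ S, θ ∉ β ω → |D θ ω| ≤ g ω) :
    HasDerivWithinAt
      (fun t : ℝ => ∫ ω, F (θ₀ + t • (EuclideanSpace.single k (1 : ℝ))) ω ∂μ)
      (∫ ω, D θ₀ ω ∂μ) (Set.Ici (0 : ℝ)) 0 := by
  set v : EuclideanSpace ℝ (Fin m) := EuclideanSpace.single k (1 : ℝ) with hv
  have hv0 : v ≠ 0 := by
    intro h
    have : ‖v‖ = 1 := by rw [hv, EuclideanSpace.norm_single]; simp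
    rw [h] at this; simp at this
  set L : ℝ → EuclideanSpace ℝ (Fin m) := fun t => θ₀ + t • v with hL
  have hLinj : Function.Injective L := by
    intro s t hst
    have : s • v = t • v := by
      have := hst; simp only [hL] at this
      exact add_left_cancel this
    exact smul_left_injective ℝ hv0 this
  have hLcont : Continuous L := by
    exact continuous_const.add (continuous_id.smul continuous_const)
  have hLS : ∀ t ∈ Icc (0:ℝ) α, L t ∈ S := by
    intro t ht; rw [hS]; exact ⟨t, ht, rfl⟩
  have hθ₀S : θ₀ ∈ S := by
    have := hLS 0 ⟨le_rfl, hα.le⟩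
    simpa [hL] using this
  have hL0 : L 0 = θ₀ := by simp [hL]
  -- reduce HasLineDerivAt to HasDerivAt of the composed path
  have hline : ∀ (ω : Ω) (s : ℝ) (d : ℝ),
      HasLineDerivAt ℝ (fun θ' => F θ' ω) d (L s) v →
      HasDerivAt (fun t => F (L t) ω) d s := by
    intro ω s d hld
    have h0 : HasDerivAt (fun t : ℝ => F (L s + t • v) ω) d 0 := hld
    have h1 : HasDerivAt (fun t : ℝ => F (L s + (t - s) • v) ω) (d * 1) s := by
      have hid : HasDerivAt (fun t : ℝ => t - s) (1:ℝ) s := by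
        simpa using (hasDerivAt_id s).sub_const s
      have := HasDerivAt.comp s (by simpa using h0) hid
      exact this
    have h2 : (fun t : ℝ => F (L s + (t - s) • v) ω) = fun t => F (L t) ω := by
      funext t
      congr 1
      simp only [hL]
      module
    rw [h2] at h1
    simpa using h1
  -- the slope functions
  set Φ : ℝ → Ω → ℝ := fun t ω => slope (fun s => F (L s) ω) 0 t with hΦ
  have hIoc : Ioc (0:ℝ) α ∈ 𝓝[>] (0:ℝ) := Ioc_mem_nhdsGT_of_mem ⟨le_rfl, hα⟩
  -- a.e. properties
  have hmain : Tendsto (fun t => ∫ ω, Φ t ω ∂μ) (𝓝[>] (0:ℝ)) (𝓝 (∫ ω, D θ₀ ω ∂μ)) := by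
    refine tendsto_integral_filter_of_dominated_convergence g ?_ ?_ hg ?_
    · filter_upwards [hIoc] with t ht
      have : Φ t = fun ω => (t - 0)⁻¹ • (F (L t) ω - F (L 0) ω) := by
        funext ω; simp [hΦ, slope]
      rw [this]
      exact (((hFint (L t) (hLS t ⟨ht.1.le, ht.2⟩)).1.sub
        (hFint (L 0) (hLS 0 ⟨le_rfl, hα.le⟩)).1).const_smul ((t - (0:ℝ))⁻¹))
    · filter_upwards [hIoc] with t ht
      filter_upwards [hae, hbound] with ω hω hbω
      obtain ⟨hcnt, hβS, hθ₀β, hcont, hderiv⟩ := hω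
      -- apply the MVT on [0, t]
      have hβcnt : (L ⁻¹' β ω).Countable := hcnt.preimage hLinj
      have habs : |F (L t) ω - F (L 0) ω| ≤ g ω * (t - 0) := by
        refine aux_mvt_abs (f := fun s => F (L s) ω) (f' := fun s => D (L s) ω) hβcnt ht.1.le ?_ ?_ ?_
        · exact (hcont.comp hLcont.continuousOn
            (fun s hs => hLS s ⟨hs.1, hs.2.trans ht.2⟩))
        · intro s hs hsβ
          exact hline ω s _ (hderiv (L s) (hLS s ⟨hs.1, hs.2.trans ht.2⟩) hsβ)
        · intro s hs hsβ
          exact hbω (L s) (hLS s ⟨hs.1, hs.2.trans ht.2⟩) hsβ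
      have ht0 : (0:ℝ) < t := ht.1
      rw [hΦ]
      simp only [Real.norm_eq_abs]
      rw [slope_def_field, abs_div]
      rw [div_le_iff₀ (by simpa using abs_pos.mpr (ne_of_gt ht0))]
      calc |F (L t) ω - F (L 0) ω| ≤ g ω * (t - 0) := habs
        _ = g ω * |t - 0| := by rw [abs_of_pos (by linarith)]
    · filter_upwards [hae] with ω hω
      obtain ⟨hcnt, hβS, hθ₀β, hcont, hderiv⟩ := hω
      have hda : HasDerivAt (fun s => F (L s) ω) (D θ₀ ω) 0 := by
        have := hline ω 0 (D θ₀ ω) (by rw [hL0]; exact hderiv θ₀ hθ₀S hθ₀β)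
        exact this
      have := hasDerivAt_iff_tendsto_slope.mp hda
      exact this.mono_left (nhdsWithin_mono 0 (fun z hz => ne_of_gt hz))
  -- identify the integral of slopes with the slope of the integral
  have hcongr : ∀ᶠ t in 𝓝[>] (0:ℝ),
      ∫ ω, Φ t ω ∂μ =
        slope (fun t : ℝ => ∫ ω, F (θ₀ + t • v) ω ∂μ) 0 t := by
    filter_upwards [hIoc] with t ht
    have hInt_t : Integrable (F (L t)) μ := hFint (L t) (hLS t ⟨ht.1.le, ht.2⟩)
    have hInt_0 : Integrable (F (L 0)) μ := hFint (L 0) (hLS 0 ⟨le_rfl, hα.le⟩)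
    have h1 : ∫ ω, Φ t ω ∂μ = (t - 0)⁻¹ • ∫ ω, (F (L t) ω - F (L 0) ω) ∂μ := by
      have h2 : Φ t = fun ω => (t - 0)⁻¹ • (F (L t) ω - F (L 0) ω) := by
        funext ω; simp [hΦ, slope]
      rw [h2, integral_smul]
    rw [h1, integral_sub hInt_t hInt_0]
    simp [slope, hL]
  have hfinal : Tendsto (slope (fun t : ℝ => ∫ ω, F (θ₀ + t • v) ω ∂μ) 0)
      (𝓝[>] (0:ℝ)) (𝓝 (∫ ω, D θ₀ ω ∂μ)) := hmain.congr' hcongr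
  rw [hasDerivWithinAt_iff_tendsto_slope]
  rw [Set.Ici_sdiff_left]
  exact hfinal
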